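/- For every infinite sequence ξ of feasible subgraphs of G, every solution of the PCO network over ξ, and every s ≥ 0, the number of indices k ≥ 1 with jump time t_k ∈ [s, s+T] is at least 1 and at most N(⌊1/r̲⌋ + 1), where r̲ := min_{1≤i≤N} r_i. -/

import Mathlib

open scoped BigOperators Classical ENNReal

namespace PCO

/-- Edge sets of digraphs on the vertex set `Fin N`. -/
abbrev Edges (N : ℕ) := Finset (Fin N × Fin N)

/-- A digraph is simple if it has no self-loops. -/
def Simple (N : ℕ) (E : Edges N) : Prop := ∀ e ∈ E, e.1 ≠ e.2

/-- The set of out-edges of vertex `i` in the digraph with edge set `E`. -/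
def outEdges (N : ℕ) (E : Edges N) (i : Fin N) : Edges N := E.filter (fun e => e.1 = i)

/-- `E'` is (the edge set of) a feasible subgraph of `E`: it is a subgraph on the same
vertex set containing, for each vertex `i`, all out-edges of `i` or none of them. -/
def Feasible (N : ℕ) (E E' : Edges N) : Prop :=
  E' ⊆ E ∧ ∀ i : Fin N, outEdges N E i ⊆ E' ∨ Disjoint (outEdges N E i) E'

/-- The binary phase update rule `R_j`, with threshold `rj`, applied to the state `s`. -/
def Rset (rj s : ℝ) : Set ℝ :=
  if s < rj then {0} else if s = rj then ({0, 1} : Set ℝ) else {1}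

/-- A solution of the PCO network over the sequence `ξ` of (feasible) subgraphs of `E`
(`ξ k` is the graph used at the `k`-th jump, `k ≥ 1`): an unbounded nondecreasing sequence
of jump times `tJ` with `tJ 0 = 0`, together with the states `st k = τ(tJ k, k)` just after
each jump; the state at a hybrid time `(t,k)` is recovered by the flow, see `Sol.val`. -/
structure Sol (N : ℕ) (T : ℝ) (r : Fin N → ℝ) (E : Edges N) (ξ : ℕ → Edges N) where
  tJ : ℕ → ℝ
  st : ℕ → Fin N → ℝ
  tJ0 : tJ 0 = 0
  mono : Monotone tJ
  unbdd : ∀ M : ℝ, ∃ k, M < tJ k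
  box : ∀ k i, st k i ∈ Set.Icc (0:ℝ) 1
  box' : ∀ k i, st k i + (tJ (k+1) - tJ k) / T ∈ Set.Icc (0:ℝ) 1
  jump : ∀ k, ∃ i : Fin N,
      st k i + (tJ (k+1) - tJ k) / T = 1 ∧
      st (k+1) i = 0 ∧
      ∀ j, j ≠ i →
        ((i, j) ∈ ξ (k+1) → st (k+1) j ∈ Rset (r j) (st k j + (tJ (k+1) - tJ k) / T)) ∧
        ((i, j) ∉ ξ (k+1) → st (k+1) j = st k j)

variable {N : ℕ} {T : ℝ} {r : Fin N → ℝ} {E : Edges N} {ξ : ℕ → Edges N}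

/-- The state `τ_i(t,k)` of agent `i` at the hybrid time `(t,k)`. -/
noncomputable def Sol.val (sol : Sol N T r E ξ) (t : ℝ) (k : ℕ) (i : Fin N) : ℝ :=
  sol.st k i + (t - sol.tJ k) / T

/-- `(t,k)` is a hybrid time of the solution. -/
def Sol.HT (sol : Sol N T r E ξ) (t : ℝ) (k : ℕ) : Prop :=
  sol.tJ k ≤ t ∧ t ≤ sol.tJ (k+1)

/-- The synchronization set `A_s = {μ·1_N : μ ∈ [0,1]} ∪ {0,1}^N`. -/
def SyncSet (N : ℕ) : Set (Fin N → ℝ) :=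
  {x | ∃ μ ∈ Set.Icc (0:ℝ) 1, x = fun _ => μ} ∪ {x | ∀ i, x i = 0 ∨ x i = 1}

/-- There is a directed path (walk) of length `n` from `i` to `j` in `E`. -/
def reachIn (N : ℕ) (E : Edges N) : ℕ → Fin N → Fin N → Prop
  | 0, i, j => i = j
  | n+1, i, j => ∃ m : Fin N, (i, m) ∈ E ∧ reachIn N E n m j

/-- `i` is a root: every vertex is reachable from `i`. -/
def IsRoot (N : ℕ) (E : Edges N) (i : Fin N) : Prop := ∀ j : Fin N, ∃ n, reachIn N E n i j

/-- The depth of `j` with respect to `i`: the length of a shortest directed path from `i` to `j`. -/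
noncomputable def depth (N : ℕ) (E : Edges N) (i j : Fin N) : ℕ :=
  sInf {n | reachIn N E n i j}

/-- `q*`, the maximum depth of a vertex with respect to the root `istar`. -/
noncomputable def maxDepth (N : ℕ) (E : Edges N) (istar : Fin N) : ℕ :=
  Finset.univ.sup (fun j => depth N E istar j)

/-- `dep(G)`: the maximum of `q*` over all roots. -/
noncomputable def depG (N : ℕ) (E : Edges N) : ℕ :=
  Finset.univ.sup (fun i => if IsRoot N E i then maxDepth N E i else 0)

/-- `G_q(i*)`: the feasible subgraph of `E` whose edges are the out-edges of the vertices
at depth `q` with respect to `istar`. -/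
noncomputable def Gq (N : ℕ) (E : Edges N) (istar : Fin N) (q : ℕ) : Edges N :=
  E.filter (fun e => depth N E istar e.1 = q)

/-- `r̲ = min_i r_i`. -/
noncomputable def rmin (N : ℕ) (r : Fin N → ℝ) : ℝ := ⨅ i, r i

/-- `ℓ* = N(⌊1/r̲⌋ + 1)`. -/
noncomputable def ellStar (N : ℕ) (r : Fin N → ℝ) : ℕ :=
  N * (Nat.floor (1 / rmin N r) + 1)

/-- `L* = ℓ* q*`: the length of the synchronization string. -/
noncomputable def Lstar (N : ℕ) (r : Fin N → ℝ) (E : Edges N) (istar : Fin N) : ℕ :=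
  ellStar N r * maxDepth N E istar

/-- The sequence `ξ` contains the synchronization string `ζ(i*)` as the consecutive block
`φ_{k₀} ⋯ φ_{k₀+L*−1}`: i.e. `φ_{k₀+qℓ*+m} = G_q(i*)` for `0 ≤ q ≤ q*−1`, `0 ≤ m ≤ ℓ*−1`. -/
noncomputable def HasZetaAt (N : ℕ) (r : Fin N → ℝ) (E : Edges N) (istar : Fin N)
    (ξ : ℕ → Edges N) (k₀ : ℕ) : Prop :=
  ∀ q < maxDepth N E istar, ∀ m < ellStar N r,
    ξ (k₀ + q * ellStar N r + m) = Gq N E istar q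

/-- Partial synchronization set `A_q(i*)`: all agents of depth `≤ q` with respect to `i*`
have a common state in `[0,1]`, or all have states in `{0,1}`; the remaining agents have
states in `[0,1]`. -/
noncomputable def Aq (N : ℕ) (E : Edges N) (istar : Fin N) (q : ℕ) : Set (Fin N → ℝ) :=
  {x | (∀ i, x i ∈ Set.Icc (0:ℝ) 1) ∧
    ((∃ μ ∈ Set.Icc (0:ℝ) 1, ∀ i, depth N E istar i ≤ q → x i = μ) ∨
      (∀ i, depth N E istar i ≤ q → x i = 0 ∨ x i = 1))}

/-- The Lyapunov-like function `V`: one minus the largest circular gap between the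
(sorted) entries of `τ`, when the endpoints of `[0,1]` are identified. -/
noncomputable def Vfun (N : ℕ) (hN : 0 < N) (τ : Fin N → ℝ) : ℝ :=
  1 - Finset.univ.sup' (Finset.univ_nonempty_iff.mpr ⟨⟨0, hN⟩⟩)
      (fun i : Fin N =>
        if h : (i : ℕ) + 1 < N then
          (τ ∘ Tuple.sort τ) ⟨(i : ℕ) + 1, h⟩ - (τ ∘ Tuple.sort τ) i
        else 1 - (τ ∘ Tuple.sort τ) i + (τ ∘ Tuple.sort τ) ⟨0, hN⟩)

/-- `i` has at least one out-neighbor in `E`. -/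
def HasOut (N : ℕ) (E : Edges N) (i : Fin N) : Prop := ∃ j : Fin N, (i, j) ∈ E

/-- The set `V*` of vertices of `E` having at least one out-neighbor. -/
abbrev Vstar (N : ℕ) (E : Edges N) := {i : Fin N // HasOut N E i}

/-- The feasible subgraph corresponding to `v : V* → {0,1}`: its edge set is the union of
the out-edge sets of those `i ∈ V*` with `v i = 1`. -/
noncomputable def graphOf (N : ℕ) (E : Edges N) (v : Vstar N E → Bool) : Edges N :=
  E.filter (fun e => (if h : HasOut N E e.1 then v ⟨e.1, h⟩ else false) = true)

/-- The sample space `Ω = ({0,1}^{V*})^{ℕ}`; `ω k` represents `ω_{k+1}`. -/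
abbrev Omega (N : ℕ) (E : Edges N) := ℕ → (Vstar N E → Bool)

open MeasureTheory in
/-- The Bernoulli(`p`) measure on `{0,1}`. -/
noncomputable def bern (p : ℝ) (hp : p ≤ 1) : Measure Bool :=
  (PMF.bernoulli (Real.toNNReal p) (Real.toNNReal_le_one.mpr hp)).toMeasure

open MeasureTheory in
/-- The measure `μ_p` on `{0,1}^{V*}` making coordinates i.i.d. Bernoulli(`p`). -/
noncomputable def muP (N : ℕ) (E : Edges N) (p : ℝ) (hp : p ≤ 1) :
    Measure (Vstar N E → Bool) :=
  Measure.pi (fun _ => bern p hp)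

open MeasureTheory in
/-- `P` is the countable product of copies of `μ_p` on `Ω`: the probability of every
cylinder event is the corresponding product. -/
def IsProductMeasure (N : ℕ) (E : Edges N) (p : ℝ) (hp : p ≤ 1)
    (P : Measure (Omega N E)) : Prop :=
  ∀ (S : Finset ℕ) (f : ℕ → Set (Vstar N E → Bool)),
    P {ω | ∀ k ∈ S, ω k ∈ f k} = ∏ k ∈ S, muP N E p hp (f k)

/-- The sample path `ω` contains the synchronization string `ζ(i*)` at positions
`ω_{ℓ+1} ⋯ ω_{ℓ+L*}`. -/
noncomputable def HasZetaAtOmega (N : ℕ) (r : Fin N → ℝ) (E : Edges N) (istar : Fin N)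
    (ω : Omega N E) (ℓ : ℕ) : Prop :=
  ∀ q < maxDepth N E istar, ∀ m < ellStar N r,
    graphOf N E (ω (ℓ + q * ellStar N r + m)) = Gq N E istar q

/-- The sequence of feasible subgraphs `ξ = ω` determined by the sample path `ω`
(`seqOf ω k = φ_k` for `k ≥ 1`). -/
noncomputable def seqOf (N : ℕ) (E : Edges N) (ω : Omega N E) : ℕ → Edges N :=
  fun k => graphOf N E (ω (k - 1))

/-- The sync-time `T*` of a solution: the infimum of the (continuous) times `t ≥ 0` at
which the state lies in the synchronization set (`∞` if there is no such time). -/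
noncomputable def Sol.syncTime (sol : Sol N T r E ξ) : ℝ≥0∞ :=
  sInf {x : ℝ≥0∞ | ∃ t : ℝ, ∃ k : ℕ, 0 ≤ t ∧ sol.HT t k ∧
    (fun i => sol.val t k i) ∈ SyncSet N ∧ x = ENNReal.ofReal t}

/-- Euclidean distance from a point of `ℝ^N` to a set. -/
noncomputable def eucDist (N : ℕ) (x : Fin N → ℝ) (S : Set (Fin N → ℝ)) : ℝ :=
  Metric.infDist ((WithLp.equiv 2 (Fin N → ℝ)).symm x)
    ((WithLp.equiv 2 (Fin N → ℝ)).symm '' S)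

/-- Auxiliary: once `st m i = 0`, at any later jump index `k` either the state of `i` is
bounded by the elapsed time over `T`, or at least `r i * T` time has elapsed since `tJ m`. -/
private lemma key_invariant (sol : Sol N T r E ξ) (hT : 0 < T)
    (hr : ∀ i, r i ∈ Set.Ioo (0:ℝ) 1) (i : Fin N) (m : ℕ) (h0 : sol.st m i = 0) :
    ∀ k, m ≤ k →
      sol.st k i ≤ (sol.tJ k - sol.tJ m) / T ∨ sol.tJ m + r i * T ≤ sol.tJ k := by
  intro k hk
  induction k, hk using Nat.le_induction with
  | base =>
    left; rw [h0, sub_self, zero_div]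
  | succ k hk IH =>
    have hmono : sol.tJ k ≤ sol.tJ (k+1) := sol.mono (Nat.le_succ k)
    have hmk : sol.tJ m ≤ sol.tJ (k+1) := sol.mono (le_trans hk (Nat.le_succ k))
    rcases IH with hst | htime
    · -- pre-jump value bound
      have hgap : 0 ≤ sol.tJ (k+1) - sol.tJ k := sub_nonneg.mpr hmono
      have hv : sol.st k i + (sol.tJ (k+1) - sol.tJ k) / T ≤
          (sol.tJ (k+1) - sol.tJ m) / T := by
        have : (sol.tJ k - sol.tJ m) / T + (sol.tJ (k+1) - sol.tJ k) / T =
            (sol.tJ (k+1) - sol.tJ m) / T := by ring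
        linarith [add_le_add_right hst ((sol.tJ (k+1) - sol.tJ k) / T)]
      obtain ⟨j, hj1, hj2, hj3⟩ := sol.jump k
      by_cases hij : i = j
      · left; subst hij; rw [hj2]
        exact div_nonneg (sub_nonneg.mpr hmk) hT.le
      · obtain ⟨hin, hout⟩ := hj3 i hij
        by_cases hmem : (j, i) ∈ ξ (k+1)
        · have hR := hin hmem
          unfold Rset at hR
          set v := sol.st k i + (sol.tJ (k+1) - sol.tJ k) / T with hvdef
          split_ifs at hR with h1 h2
          · -- v < r i : st = 0
            simp only [Set.mem_singleton_iff] at hR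
            left; rw [hR]
            exact div_nonneg (sub_nonneg.mpr hmk) hT.le
          · -- v = r i : st ∈ {0,1}
            rcases hR with hR | hR
            · left; rw [hR]
              exact div_nonneg (sub_nonneg.mpr hmk) hT.le
            · right
              have h3 : r i ≤ (sol.tJ (k+1) - sol.tJ m) / T := h2 ▸ hv
              have := (le_div_iff₀ hT).mp h3
              linarith
          · -- v > r i : st = 1
            right
            have hlt : r i ≤ v := le_of_not_gt h1
            have h3 : r i ≤ (sol.tJ (k+1) - sol.tJ m) / T := le_trans hlt hv
            have := (le_div_iff₀ hT).mp h3
            linarith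
        · left
          rw [hout hmem]
          calc sol.st k i ≤ (sol.tJ k - sol.tJ m) / T := hst
            _ ≤ (sol.tJ (k+1) - sol.tJ m) / T := by gcongr
    · right; linarith

/-- `i` fires at jump index `m ≥ 1`. -/
private def FiresAt (sol : Sol N T r E ξ) (i : Fin N) (m : ℕ) : Prop :=
  sol.st m i = 0 ∧ sol.st (m-1) i + (sol.tJ m - sol.tJ (m-1)) / T = 1

/-- Two consecutive firings of a vertex are at least `r i * T` apart. -/
private lemma fires_gap (sol : Sol N T r E ξ) (hT : 0 < T)
    (hr : ∀ i, r i ∈ Set.Ioo (0:ℝ) 1) (i : Fin N) (m m' : ℕ) (hm : 1 ≤ m)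
    (hlt : m < m') (h1 : FiresAt sol i m) (h2 : FiresAt sol i m') :
    sol.tJ m + r i * T ≤ sol.tJ m' := by
  have hm' : m ≤ m' - 1 := Nat.le_sub_one_of_lt hlt
  have hm'1 : m' - 1 + 1 = m' := Nat.succ_pred_eq_of_pos (lt_of_le_of_lt (Nat.zero_le m) hlt)
  have hmono : sol.tJ (m'-1) ≤ sol.tJ m' := by
    conv_rhs => rw [← hm'1]
    exact sol.mono (Nat.le_succ _)
  rcases key_invariant sol hT hr i m h1.1 (m'-1) hm' with hst | htime
  · -- state reaches 1 by flow: at least T elapsed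
    have hfire := h2.2
    have hmm : sol.tJ m ≤ sol.tJ (m'-1) := sol.mono hm'
    have hsum : 1 ≤ (sol.tJ (m'-1) - sol.tJ m) / T + (sol.tJ m' - sol.tJ (m'-1)) / T := by
      linarith [add_le_add_right hst ((sol.tJ m' - sol.tJ (m'-1)) / T)]
    have heq : (sol.tJ (m'-1) - sol.tJ m) / T + (sol.tJ m' - sol.tJ (m'-1)) / T =
        (sol.tJ m' - sol.tJ m) / T := by ring
    rw [heq] at hsum
    have := (le_div_iff₀ hT).mp hsum
    have hri : r i ≤ 1 := (hr i).2.le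
    nlinarith
  · linarith

theorem stmt7
    (N : ℕ) (hN : 0 < N) (T : ℝ) (hT : 0 < T) (r : Fin N → ℝ)
    (hr : ∀ i, r i ∈ Set.Ioo (0:ℝ) 1) (E : Edges N) (hE : Simple N E)
    (ξ : ℕ → Edges N) (hξ : ∀ k, 1 ≤ k → Feasible N E (ξ k))
    (sol : Sol N T r E ξ) (s : ℝ) (hs : 0 ≤ s) :
    {k : ℕ | 1 ≤ k ∧ sol.tJ k ∈ Set.Icc s (s + T)}.Finite ∧
    1 ≤ {k : ℕ | 1 ≤ k ∧ sol.tJ k ∈ Set.Icc s (s + T)}.ncard ∧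
    {k : ℕ | 1 ≤ k ∧ sol.tJ k ∈ Set.Icc s (s + T)}.ncard ≤
      N * (Nat.floor (1 / rmin N r) + 1) := by
  haveI : Nonempty (Fin N) := Fin.pos_iff_nonempty.mp hN
  -- facts about rmin
  obtain ⟨i₀, hi₀⟩ := exists_eq_ciInf_of_finite (f := r)
  have hrm_pos : 0 < rmin N r := by rw [rmin, ← hi₀]; exact (hr i₀).1
  have hrm_le : ∀ i, rmin N r ≤ r i := fun i => ciInf_le (Finite.bddBelow_range _) i
  set F := Nat.floor (1 / rmin N r) + 1 with hF
  have hFr : 1 < (F : ℝ) * rmin N r := by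
    have h1 : 1 / rmin N r < (F : ℝ) := by
      rw [hF]; push_cast; exact Nat.lt_floor_add_one _
    calc (1:ℝ) = (1 / rmin N r) * rmin N r := by field_simp
      _ < (F : ℝ) * rmin N r := by
          exact mul_lt_mul_of_pos_right h1 hrm_pos
  -- gaps between consecutive jumps are in [0, T]
  have hgapT : ∀ k, sol.tJ (k+1) ≤ sol.tJ k + T := by
    intro k
    obtain ⟨j, hj1, _, _⟩ := sol.jump k
    have hb := (sol.box k j).1
    have : (sol.tJ (k+1) - sol.tJ k) / T ≤ 1 := by linarith
    have := (div_le_one hT).mp this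
    linarith
  -- the window set
  set W := {k : ℕ | 1 ≤ k ∧ sol.tJ k ∈ Set.Icc s (s + T)} with hWdef
  obtain ⟨K, hK⟩ := sol.unbdd (s + T)
  have hWsub : W ⊆ Set.Iio K := by
    intro k hk
    by_contra hge
    rw [Set.mem_Iio, not_lt] at hge
    exact absurd (le_trans (sol.mono hge) hk.2.2) (not_le.mpr hK)
  have hWfin : W.Finite := (Set.finite_Iio K).subset hWsub
  refine ⟨hWfin, ?_, ?_⟩
  · -- lower bound: some jump lies in the window
    have hex : ∃ j, 1 ≤ j ∧ s ≤ sol.tJ j := by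
      obtain ⟨k, hk⟩ := sol.unbdd s
      exact ⟨k+1, Nat.le_add_left 1 k, le_trans hk.le (sol.mono (Nat.le_succ k))⟩
    set j₀ := Nat.find hex with hj₀
    obtain ⟨hj1, hj2⟩ := Nat.find_spec hex
    refine (Set.ncard_pos hWfin).mpr ⟨j₀, hj1, hj2, ?_⟩
    rcases Nat.lt_or_ge j₀ 2 with h2 | h2
    · have hj₀1 : j₀ = 1 := le_antisymm (Nat.lt_succ_iff.mp h2) hj1
      rw [hj₀1]
      have h01 := hgapT 0
      rw [zero_add, sol.tJ0] at h01
      linarith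
    · have hlt : j₀ - 1 < j₀ := Nat.sub_lt (lt_of_lt_of_le Nat.zero_lt_one hj1) Nat.zero_lt_one
      have hmin := Nat.find_min hex hlt
      push_neg at hmin
      have h11 : 1 ≤ j₀ - 1 := Nat.le_sub_one_of_lt h2
      have hlt2 : sol.tJ (j₀ - 1) < s := hmin h11
      have hg := hgapT (j₀ - 1)
      rw [Nat.sub_add_cancel hj1] at hg
      linarith
  · -- upper bound
    classical
    -- firing vertex of jump k (k ≥ 1)
    set fire : ℕ → Fin N := fun k => (sol.jump (k-1)).choose with hfire
    have hfireSpec : ∀ k, 1 ≤ k → FiresAt sol (fire k) k := by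
      intro k hk
      obtain ⟨n, rfl⟩ : ∃ n, k = n + 1 := ⟨k - 1, (Nat.sub_add_cancel hk).symm⟩
      have hspec := (sol.jump n).choose_spec
      exact ⟨hspec.2.1, hspec.1⟩
    set Wf := (Finset.range K).filter (fun k => 1 ≤ k ∧ sol.tJ k ∈ Set.Icc s (s+T)) with hWf
    have hWeq : W = ↑Wf := by
      ext k
      simp only [hWf, Finset.coe_filter, Finset.mem_range, Set.mem_setOf_eq, hWdef]
      constructor
      · intro hk; exact ⟨hWsub hk, hk⟩
      · intro hk; exact hk.2
    rw [hWeq, Set.ncard_coe_finset]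
    have hsum : Wf.card = ∑ i : Fin N, (Wf.filter (fun k => fire k = i)).card :=
      Finset.card_eq_sum_card_fiberwise (fun x _ => Finset.mem_univ (fire x))
    rw [hsum]
    have hfiber : ∀ i : Fin N, (Wf.filter (fun k => fire k = i)).card ≤ F := by
      intro i
      by_contra hcard
      push_neg at hcard
      set S := Wf.filter (fun k => fire k = i) with hS
      have hcard' : F + 1 ≤ S.card := hcard
      set e := S.orderEmbOfCardLe hcard' with he
      have hmemS : ∀ j : Fin (F+1), e j ∈ S := fun j => Finset.orderEmbOfCardLe_mem S hcard' j
      have hprops : ∀ j : Fin (F+1), 1 ≤ e j ∧ sol.tJ (e j) ∈ Set.Icc s (s+T) ∧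
          FiresAt sol i (e j) := by
        intro j
        have := hmemS j
        rw [hS, Finset.mem_filter, hWf, Finset.mem_filter] at this
        exact ⟨this.1.2.1, this.1.2.2, this.2 ▸ hfireSpec _ this.1.2.1⟩
      have chain : ∀ n : ℕ, (hn : n < F + 1) →
          sol.tJ (e ⟨0, Nat.succ_pos F⟩) + n * (rmin N r * T) ≤ sol.tJ (e ⟨n, hn⟩) := by
        intro n
        induction n with
        | zero => intro hn; simp
        | succ n IH =>
          intro hn
          have hn' : n < F + 1 := Nat.lt_of_succ_lt hn
          have hlt : e ⟨n, hn'⟩ < e ⟨n+1, hn⟩ := by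
            apply e.strictMono
            exact Fin.mk_lt_mk.mpr (Nat.lt_succ_self n)
          have hgap := fires_gap sol hT hr i (e ⟨n, hn'⟩) (e ⟨n+1, hn⟩)
            (hprops ⟨n, hn'⟩).1 hlt (hprops ⟨n, hn'⟩).2.2 (hprops ⟨n+1, hn⟩).2.2
          have hri : rmin N r * T ≤ r i * T := by
            exact mul_le_mul_of_nonneg_right (hrm_le i) hT.le
          have := IH hn'
          push_cast
          push_cast at this
          linarith
      have hlast := chain F (Nat.lt_succ_self F)
      have h0w := (hprops ⟨0, Nat.succ_pos F⟩).2.1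
      have hFw := (hprops ⟨F, Nat.lt_succ_self F⟩).2.1
      have hgt : T < (F : ℝ) * (rmin N r * T) := by
        have := mul_lt_mul_of_pos_right hFr hT
        rw [one_mul] at this
        linarith [this]
      have := h0w.1
      have := hFw.2
      linarith
    calc ∑ i : Fin N, (Wf.filter (fun k => fire k = i)).card
        ≤ ∑ _i : Fin N, F := Finset.sum_le_sum (fun i _ => hfiber i)
      _ = N * F := by rw [Finset.sum_const, Finset.card_univ, Fintype.card_fin, smul_eq_mul]

end PCO
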